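/- For all u₁, u₂, v ∈ I_{RC}, the label changer A^{RC;u₂u₁} := (d_R/|N_C|) Σ_{m∈N_C} conj(R^{j₂j₁}(m)) A^{q_{i₂} m q_{i₁}⁻¹} (with u₁ = (i₁,j₁), u₂ = (i₂,j₂)) satisfies A^{RC;u₂u₁} F^{RC;u₁v} Ω = F^{RC;u₂v} Ω. -/

import Mathlib

lemma schur_orthogonality {N : Type*} [Group N] [Fintype N] {dR : ℕ} (hdR : 0 < dR)
    (R : N →* Matrix (Fin dR) (Fin dR) ℂ)
    (hRirr : ∀ M : Matrix (Fin dR) (Fin dR) ℂ,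
      (∀ m, R m * M = M * R m) → ∃ z : ℂ, M = z • (1 : Matrix (Fin dR) (Fin dR) ℂ))
    (b c a d : Fin dR) :
    ∑ m : N, R m a b * R m⁻¹ c d =
      (if b = c then ((Fintype.card N : ℂ) / dR) else 0) * (if a = d then 1 else 0) := by
  have hdR' : (dR : ℂ) ≠ 0 := Nat.cast_ne_zero.mpr hdR.ne'
  set E : Matrix (Fin dR) (Fin dR) ℂ := Matrix.single b c 1 with hE
  set M : Matrix (Fin dR) (Fin dR) ℂ := ∑ m : N, R m * E * R m⁻¹ with hM
  have hcomm : ∀ n, R n * M = M * R n := by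
    intro n
    rw [hM, Finset.mul_sum, Finset.sum_mul]
    refine Fintype.sum_equiv (Equiv.mulLeft n) _ _ ?_
    intro m
    have h1 : R n⁻¹ * R n = 1 := by rw [← map_mul, inv_mul_cancel, map_one]
    simp only [Equiv.coe_mulLeft, map_mul, mul_inv_rev]
    simp only [mul_assoc]
    rw [h1, mul_one]
  obtain ⟨z, hz⟩ := hRirr M hcomm
  have htrE : Matrix.trace E = if b = c then 1 else 0 := by
    by_cases h : b = c
    · subst h
      simp [hE, Matrix.trace, Matrix.diag, Matrix.single, Finset.filter_eq]
    · simp only [hE, Matrix.trace, Matrix.diag, h, if_false]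
      refine Finset.sum_eq_zero fun i _ => ?_
      simp only [Matrix.single, Matrix.of_apply, ite_eq_right_iff, and_imp]
      intro hb hc
      exact absurd (hb.trans hc.symm) h
  have htrM : Matrix.trace M = (Fintype.card N : ℂ) * (if b = c then 1 else 0) := by
    rw [hM, Matrix.trace_sum]
    have hterm : ∀ m : N, Matrix.trace (R m * E * R m⁻¹) = Matrix.trace E := by
      intro m
      rw [Matrix.trace_mul_cycle, ← map_mul, inv_mul_cancel, map_one, one_mul]
    rw [Finset.sum_congr rfl (fun m _ => hterm m), Finset.sum_const, Finset.card_univ,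
      nsmul_eq_mul, htrE]
  have hzdr : z * dR = (Fintype.card N : ℂ) * (if b = c then 1 else 0) := by
    rw [← htrM, hz, Matrix.trace_smul, Matrix.trace_one]
    simp [Fintype.card_fin, smul_eq_mul]
  have hEmul : ∀ X Y : Matrix (Fin dR) (Fin dR) ℂ, (X * E * Y) a d = X a b * Y c d := by
    intro X Y
    rw [mul_assoc, Matrix.mul_apply, Finset.sum_eq_single b]
    · rw [hE, Matrix.single_mul_apply_same, one_mul]
    · intro j _ hj
      rw [hE, Matrix.single_mul_apply_of_ne (h := hj), mul_zero]
    · intro hb; exact absurd (Finset.mem_univ b) hb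
  have hentry : M a d = ∑ m : N, R m a b * R m⁻¹ c d := by
    rw [hM, Matrix.sum_apply]
    exact Finset.sum_congr rfl fun m _ => hEmul _ _
  have h2 : M a d = z * (if a = d then 1 else 0) := by
    rw [hz, Matrix.smul_apply, Matrix.one_apply, smul_eq_mul]
  have hzval : z = (Fintype.card N : ℂ) * (if b = c then 1 else 0) / dR := by
    field_simp [← hzdr]
    exact hzdr
  rw [← hentry, h2, hzval]
  split_ifs <;> simp


/-- For a ribbon ending at a site where the gauge transformations `A^k` act,
with ground-state vector `Ω` (fixed by all `A^k`), the label changer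
`A^{RC;u₂u₁} = (d_R/|N_C|) Σ_m conj(R^{j₂j₁}(m)) A^{q_{i₂} m q_{i₁}⁻¹}` satisfies
`A^{RC;u₂u₁} F^{RC;u₁v} Ω = F^{RC;u₂v} Ω` for all `u₁, u₂, v ∈ I_{RC}`. -/
theorem quantum_double_label_changer_on_ground_state
    {G : Type*} [Group G] [Fintype G]
    {H : Type*} [NormedAddCommGroup H] [InnerProductSpace ℂ H]
    -- ribbon operators and gauge transformations at the initial site
    (F : G → G → H →L[ℂ] H) (A : G → H →L[ℂ] H)
    (hA1 : A 1 = 1)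
    (hAmul : ∀ k l : G, A k * A l = A (k * l))
    (hAF : ∀ k h g : G, A k * F h g = F (k * h * k⁻¹) (k * g) * A k)
    -- the ground state vector
    (Ω : H) (hΩA : ∀ k : G, A k Ω = Ω)
    -- the conjugacy class `C = {c_1, …, c_{|C|}}`, representative `r_C`, iterators `q_i`
    (r : G) (nC : ℕ) (c : Fin nC → G) (q : Fin nC → G)
    (hcinj : Function.Injective c)
    (hcclass : ∀ g : G, IsConj r g ↔ ∃ i, c i = g)
    (hq : ∀ i, c i = q i * r * (q i)⁻¹)
    -- the centralizer `N_C` of `r_C` in `G`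
    (N : Subgroup G) [Fintype N] (hN : N = Subgroup.centralizer {r})
    -- an irreducible unitary matrix representation `R` of `N_C` of dimension `d_R`
    (dR : ℕ) (hdR : 0 < dR)
    (R : N →* Matrix (Fin dR) (Fin dR) ℂ)
    (hRunitary : ∀ m, R m * star (R m) = 1)
    (hRirr : ∀ M : Matrix (Fin dR) (Fin dR) ℂ,
      (∀ m, R m * M = M * R m) → ∃ z : ℂ, M = z • (1 : Matrix (Fin dR) (Fin dR) ℂ))
    -- the ribbon operators in the representation basis
    (FRC : Fin nC × Fin dR → Fin nC × Fin dR → H →L[ℂ] H)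
    (hFRC : ∀ u v : Fin nC × Fin dR, FRC u v =
      ((dR : ℂ) / (Fintype.card N : ℂ)) •
        ∑ m : N, star (R m u.2 v.2) • F (c u.1)⁻¹ (q u.1 * (m : G) * (q v.1)⁻¹))
    -- the label changers `A^{RC;u₂u₁}`
    (ARC : Fin nC × Fin dR → Fin nC × Fin dR → H →L[ℂ] H)
    (hARC : ∀ u₂ u₁ : Fin nC × Fin dR, ARC u₂ u₁ =
      ((dR : ℂ) / (Fintype.card N : ℂ)) •
        ∑ m : N, star (R m u₂.2 u₁.2) • A (q u₂.1 * (m : G) * (q u₁.1)⁻¹)) :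
    ∀ u₁ u₂ v : Fin nC × Fin dR, ARC u₂ u₁ (FRC u₁ v Ω) = FRC u₂ v Ω := by
  intro u₁ u₂ v
  obtain ⟨i₁, j₁⟩ := u₁
  obtain ⟨i₂, j₂⟩ := u₂
  obtain ⟨iv, jv⟩ := v
  have hcard : (Fintype.card N : ℂ) ≠ 0 := Nat.cast_ne_zero.mpr Fintype.card_ne_zero
  have hdR' : (dR : ℂ) ≠ 0 := Nat.cast_ne_zero.mpr hdR.ne'
  set κ : ℂ := (dR : ℂ) / (Fintype.card N : ℂ) with hκ
  -- m commutes with r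
  have hmr : ∀ m : N, r * (m : G) = (m : G) * r := by
    intro m
    have hm : (m : G) ∈ Subgroup.centralizer {r} := by rw [← hN]; exact m.2
    exact Subgroup.mem_centralizer_iff.mp hm r (Set.mem_singleton r)
  -- conjugation identity
  have hconj : ∀ m : N,
      (q i₂ * (m : G) * (q i₁)⁻¹) * (c i₁)⁻¹ * (q i₂ * (m : G) * (q i₁)⁻¹)⁻¹ = (c i₂)⁻¹ := by
    intro m
    have hc : Commute ((m : G)) r⁻¹ := Commute.inv_right (hmr m).symm
    have h1 : (m : G) * r⁻¹ * (m : G)⁻¹ = r⁻¹ := by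
      rw [hc.eq, mul_assoc, mul_inv_cancel, mul_one]
    have h2 : (q i₂ * (m : G) * (q i₁)⁻¹) * (c i₁)⁻¹ * (q i₂ * (m : G) * (q i₁)⁻¹)⁻¹
        = q i₂ * ((m : G) * r⁻¹ * (m : G)⁻¹) * (q i₂)⁻¹ := by
      rw [hq i₁]; group
    rw [h2, h1, hq i₂]
    group
  -- action on the ground state
  have hAFΩ : ∀ m n : N,
      A (q i₂ * (m : G) * (q i₁)⁻¹) (F (c i₁)⁻¹ (q i₁ * (n : G) * (q iv)⁻¹) Ω)
        = F (c i₂)⁻¹ (q i₂ * ((m * n : N) : G) * (q iv)⁻¹) Ω := by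
    intro m n
    have h1 := congrArg (fun T : H →L[ℂ] H => T Ω)
      (hAF (q i₂ * (m : G) * (q i₁)⁻¹) (c i₁)⁻¹ (q i₁ * (n : G) * (q iv)⁻¹))
    simp only [ContinuousLinearMap.mul_apply, hΩA] at h1
    rw [h1, hconj m]
    congr 2
    push_cast
    group
  -- the Schur sum
  have hS : ∀ p : N, ∑ m : N, R m j₂ j₁ * R (m⁻¹ * p) j₁ jv
      = ((Fintype.card N : ℂ) / dR) * R p j₂ jv := by
    intro p
    have e1 : ∀ m : N, R m j₂ j₁ * R (m⁻¹ * p) j₁ jv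
        = ∑ s : Fin dR, R m j₂ j₁ * (R m⁻¹ j₁ s * R p s jv) := by
      intro m
      rw [map_mul, Matrix.mul_apply, Finset.mul_sum]
    rw [Finset.sum_congr rfl fun m _ => e1 m, Finset.sum_comm]
    have e2 : ∀ s : Fin dR, ∑ m : N, R m j₂ j₁ * (R m⁻¹ j₁ s * R p s jv)
        = ((if j₁ = j₁ then ((Fintype.card N : ℂ) / dR) else 0) *
            (if j₂ = s then 1 else 0)) * R p s jv := by
      intro s
      rw [← schur_orthogonality hdR R hRirr j₁ j₁ j₂ s, Finset.sum_mul]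
      exact Finset.sum_congr rfl fun m _ => by ring
    rw [Finset.sum_congr rfl fun s _ => e2 s]
    simp [Finset.sum_ite_eq, mul_comm]
  rw [hARC, hFRC, hFRC]
  simp only [ContinuousLinearMap.smul_apply, ContinuousLinearMap.sum_apply, map_smul, map_sum,
    Prod.fst, Prod.snd]
  congr 1
  calc ∑ n : N, star (R n j₁ jv) • κ •
          ∑ m : N, star (R m j₂ j₁) •
            A (q i₂ * (m : G) * (q i₁)⁻¹) (F (c i₁)⁻¹ (q i₁ * (n : G) * (q iv)⁻¹) Ω)
      = ∑ n : N, ∑ m : N, (κ * (star (R m j₂ j₁) * star (R n j₁ jv))) •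
          F (c i₂)⁻¹ (q i₂ * ((m * n : N) : G) * (q iv)⁻¹) Ω := by
        refine Finset.sum_congr rfl fun n _ => ?_
        rw [Finset.smul_sum, Finset.smul_sum]
        refine Finset.sum_congr rfl fun m _ => ?_
        rw [hAFΩ m n, smul_smul, smul_smul]
        congr 1
        ring
    _ = ∑ m : N, ∑ n : N, (κ * (star (R m j₂ j₁) * star (R n j₁ jv))) •
          F (c i₂)⁻¹ (q i₂ * ((m * n : N) : G) * (q iv)⁻¹) Ω := Finset.sum_comm
    _ = ∑ m : N, ∑ p : N, (κ * (star (R m j₂ j₁) * star (R (m⁻¹ * p) j₁ jv))) •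
          F (c i₂)⁻¹ (q i₂ * ((p : N) : G) * (q iv)⁻¹) Ω := by
        refine Finset.sum_congr rfl fun m _ => ?_
        refine Fintype.sum_equiv (Equiv.mulLeft m) _ _ fun n => ?_
        simp
    _ = ∑ p : N, (∑ m : N, κ * (star (R m j₂ j₁) * star (R (m⁻¹ * p) j₁ jv))) •
          F (c i₂)⁻¹ (q i₂ * ((p : N) : G) * (q iv)⁻¹) Ω := by
        rw [Finset.sum_comm]
        exact Finset.sum_congr rfl fun p _ => (Finset.sum_smul).symm
    _ = ∑ p : N, star (R p j₂ jv) •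
          F (c i₂)⁻¹ (q i₂ * ((p : N) : G) * (q iv)⁻¹) Ω := by
        refine Finset.sum_congr rfl fun p _ => ?_
        congr 1
        calc ∑ m : N, κ * (star (R m j₂ j₁) * star (R (m⁻¹ * p) j₁ jv))
            = κ * star (∑ m : N, R m j₂ j₁ * R (m⁻¹ * p) j₁ jv) := by
              rw [star_sum, Finset.mul_sum]
              refine Finset.sum_congr rfl fun m _ => ?_
              rw [star_mul']
          _ = star (R p j₂ jv) := by
              rw [hS p, star_mul', star_div₀, star_natCast, star_natCast, hκ]
              field_simp
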